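/- Let N be a positive integer. The number of cyclic subgroups of order N of the group (ℤ/Nℤ) × (ℤ/Nℤ) equals ψ(N), and the natural action of GL₂(ℤ/Nℤ) on the set of cyclic subgroups of order N of (ℤ/Nℤ)² (by applying a matrix to each element of the subgroup) is transitive. -/

import Mathlib

open Real Matrix

/-- The Dedekind psi function `ψ(N) = N · ∏_{p | N prime} (1 + 1/p)`. -/
noncomputable def dedekindPsi (N : ℕ) : ℝ :=
  (N : ℝ) * ∏ p ∈ N.primeFactors, (1 + 1 / (p : ℝ))

/-- `H` is a cyclic subgroup of order `N` of `(ℤ/Nℤ)²`. -/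
def IsCyclicOfOrder (N : ℕ) (H : AddSubgroup (Fin 2 → ZMod N)) : Prop :=
  (∃ v, H = AddSubgroup.zmultiples v) ∧ Nat.card H = N

namespace CyclicAux

variable {N : ℕ}

/-- primitivity -/
def Prim (N : ℕ) (v : Fin 2 → ZMod N) : Prop := ∃ x y : ZMod N, x * v 0 + y * v 1 = 1

lemma nsmul_card (n : ℕ) (v : Fin 2 → ZMod n) : n • v = 0 := by
  funext i
  show n • v i = 0
  rw [nsmul_eq_mul, ZMod.natCast_self, zero_mul]

lemma addOrderOf_dvd' (n : ℕ) (v : Fin 2 → ZMod n) : addOrderOf v ∣ n :=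
  addOrderOf_dvd_of_nsmul_eq_zero (nsmul_card n v)

lemma addOrderOf_eq_iff_prim (hN : 0 < N) (v : Fin 2 → ZMod N) :
    addOrderOf v = N ↔ Prim N v := by
  haveI : NeZero N := ⟨hN.ne'⟩
  constructor
  · intro h
    set a := (v 0).val with ha
    set b := (v 1).val with hb
    set m := Nat.gcd b N with hm
    set d := Nat.gcd a m with hd
    have hdm : d ∣ m := Nat.gcd_dvd_right a m
    have hda : d ∣ a := Nat.gcd_dvd_left a m
    have hdb : d ∣ b := hdm.trans (Nat.gcd_dvd_left b N)
    have hdN : d ∣ N := hdm.trans (Nat.gcd_dvd_right b N)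
    have hvi : ∀ i, (((v i).val : ℕ) : ZMod N) = v i := fun i => by
      rw [ZMod.natCast_val, ZMod.cast_id]
    have hsm : (N / d) • v = 0 := by
      funext i
      show (N / d) • v i = 0
      rw [nsmul_eq_mul, ← hvi i, ← Nat.cast_mul, ZMod.natCast_eq_zero_iff]
      have hdi : d ∣ (v i).val := by
        fin_cases i
        · exact hda
        · exact hdb
      obtain ⟨c, hc⟩ := hdi
      exact ⟨c, by rw [hc, ← mul_assoc, Nat.div_mul_cancel hdN]⟩
    have hNd : N ∣ N / d := by
      have h2 := addOrderOf_dvd_of_nsmul_eq_zero hsm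
      rwa [h] at h2
    have hNd' : N / d = N := Nat.dvd_antisymm (Nat.div_dvd_of_dvd hdN) hNd
    have hd1 : d = 1 := by
      have h2 := Nat.div_div_self hdN hN.ne'
      rw [hNd', Nat.div_self hN] at h2
      omega
    have e1 : ((1 : ℕ) : ℤ) = a * Nat.gcdA a m + m * Nat.gcdB a m := by
      rw [← hd1, hd]; exact Nat.gcd_eq_gcd_ab a m
    have e2 : ((m : ℕ) : ℤ) = b * Nat.gcdA b N + N * Nat.gcdB b N := Nat.gcd_eq_gcd_ab b N
    rw [e2] at e1
    have key := congrArg (fun z : ℤ => (z : ZMod N)) e1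
    push_cast at key
    rw [ZMod.natCast_self] at key
    refine ⟨((Nat.gcdA a m : ℤ) : ZMod N), ((Nat.gcdB a m * Nat.gcdA b N : ℤ) : ZMod N), ?_⟩
    rw [← hvi 0, ← hvi 1, ← ha, ← hb]
    push_cast
    linear_combination -key
  · rintro ⟨x, y, hxy⟩
    have h1 : ∀ n : ℕ, n • v = 0 → N ∣ n := by
      intro n hn
      have h0 : (n : ZMod N) * v 0 = 0 := by
        have := congrFun hn 0
        rwa [Pi.smul_apply, nsmul_eq_mul, Pi.zero_apply] at this
      have h1' : (n : ZMod N) * v 1 = 0 := by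
        have := congrFun hn 1
        rwa [Pi.smul_apply, nsmul_eq_mul, Pi.zero_apply] at this
      have : (n : ZMod N) = 0 := by
        calc (n : ZMod N) = (n : ZMod N) * (x * v 0 + y * v 1) := by rw [hxy, mul_one]
        _ = x * ((n : ZMod N) * v 0) + y * ((n : ZMod N) * v 1) := by ring
        _ = 0 := by rw [h0, h1']; ring
      exact (ZMod.natCast_eq_zero_iff n N).mp this
    exact Nat.dvd_antisymm (addOrderOf_dvd' N v) (h1 _ (addOrderOf_nsmul_eq_zero v))


lemma eq_zero_of_smul_prim {v : Fin 2 → ZMod N} (hv : Prim N v) {c : ZMod N}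
    (h : c • v = 0) : c = 0 := by
  obtain ⟨x, y, hxy⟩ := hv
  have h0 : c * v 0 = 0 := by simpa using congrFun h 0
  have h1 : c * v 1 = 0 := by simpa using congrFun h 1
  calc c = c * (x * v 0 + y * v 1) := by rw [hxy, mul_one]
  _ = x * (c * v 0) + y * (c * v 1) := by ring
  _ = 0 := by rw [h0, h1]; ring

lemma prim_smul_iff {v : Fin 2 → ZMod N} (hv : Prim N v) (c : ZMod N) :
    Prim N (c • v) ↔ IsUnit c := by
  obtain ⟨x, y, hxy⟩ := hv
  constructor
  · rintro ⟨x', y', hxy'⟩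
    refine IsUnit.of_mul_eq_one (a := c) (x' * v 0 + y' * v 1) ?_
    have : x' * (c * v 0) + y' * (c * v 1) = 1 := by simpa using hxy'
    linear_combination this
  · rintro ⟨u, rfl⟩
    exact ⟨x * (↑u⁻¹ : ZMod N), y * (↑u⁻¹ : ZMod N), by
      have hu : (↑u⁻¹ : ZMod N) * (↑u : ZMod N) = 1 := u.inv_mul
      simp only [Pi.smul_apply, smul_eq_mul]
      linear_combination (x * v 0 + y * v 1) * hu + hxy⟩

lemma mem_zmultiples_iff' [NeZero N] (v w : Fin 2 → ZMod N) :
    w ∈ AddSubgroup.zmultiples v ↔ ∃ c : ZMod N, w = c • v := by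
  rw [AddSubgroup.mem_zmultiples_iff]
  constructor
  · rintro ⟨k, rfl⟩
    refine ⟨(k : ZMod N), ?_⟩
    funext i
    show k • v i = (k : ZMod N) * v i
    rw [zsmul_eq_mul]
  · rintro ⟨c, rfl⟩
    refine ⟨(c.val : ℤ), ?_⟩
    funext i
    show (c.val : ℤ) • v i = c * v i
    rw [zsmul_eq_mul]
    push_cast
    rw [ZMod.natCast_val, ZMod.cast_id]

lemma zmultiples_smul_unit [NeZero N] {v : Fin 2 → ZMod N} {c : ZMod N} (hc : IsUnit c) :
    AddSubgroup.zmultiples (c • v) = AddSubgroup.zmultiples v := by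
  obtain ⟨u, rfl⟩ := hc
  apply le_antisymm
  · rw [AddSubgroup.zmultiples_le, mem_zmultiples_iff']
    exact ⟨(u : ZMod N), rfl⟩
  · rw [AddSubgroup.zmultiples_le, mem_zmultiples_iff']
    exact ⟨(↑u⁻¹ : ZMod N), by
      funext i
      simp only [Pi.smul_apply, smul_eq_mul]
      rw [← mul_assoc, u.inv_mul, one_mul]⟩

/-- a cyclic-of-order-N subgroup has a primitive generator -/
lemma exists_prim_gen (hN : 0 < N) {H : AddSubgroup (Fin 2 → ZMod N)}
    (hH : IsCyclicOfOrder N H) :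
    ∃ v, Prim N v ∧ AddSubgroup.zmultiples v = H := by
  obtain ⟨⟨v, rfl⟩, hcard⟩ := hH
  rw [Nat.card_zmultiples] at hcard
  exact ⟨v, (addOrderOf_eq_iff_prim hN v).mp hcard, rfl⟩

lemma isCyclicOfOrder_zmultiples (hN : 0 < N) {v : Fin 2 → ZMod N} (hv : Prim N v) :
    IsCyclicOfOrder N (AddSubgroup.zmultiples v) :=
  ⟨⟨v, rfl⟩, by rw [Nat.card_zmultiples, (addOrderOf_eq_iff_prim hN v).mpr hv]⟩

lemma card_prim_eq (hN : 0 < N) :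
    Nat.card {v : Fin 2 → ZMod N // Prim N v}
      = Nat.card {H : AddSubgroup (Fin 2 → ZMod N) // IsCyclicOfOrder N H} * N.totient := by
  haveI : NeZero N := ⟨hN.ne'⟩
  set Sub := {H : AddSubgroup (Fin 2 → ZMod N) // IsCyclicOfOrder N H}
  set Φ : {v : Fin 2 → ZMod N // Prim N v} → Sub :=
    fun v => ⟨AddSubgroup.zmultiples v.1, isCyclicOfOrder_zmultiples hN v.2⟩ with hΦ
  have fib : ∀ H : Sub, {v : {v : Fin 2 → ZMod N // Prim N v} // Φ v = H} ≃ (ZMod N)ˣ := by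
    intro H
    have hex := exists_prim_gen hN H.2
    set w := Classical.choose hex with hwdef
    obtain ⟨hw, hwH⟩ := Classical.choose_spec hex
    refine (Equiv.ofBijective
      (fun c : (ZMod N)ˣ => (⟨⟨(c : ZMod N) • w, (prim_smul_iff hw _).mpr c.isUnit⟩, ?_⟩ :
        {v : {v : Fin 2 → ZMod N // Prim N v} // Φ v = H})) ⟨?_, ?_⟩).symm
    · apply Subtype.ext
      show AddSubgroup.zmultiples _ = H.1
      rw [zmultiples_smul_unit c.isUnit, hwH]
    · intro c₁ c₂ hc
      have h2 : (c₁ : ZMod N) • w = (c₂ : ZMod N) • w := by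
        simpa using congrArg (fun z => z.1.1) hc
      have h3 : ((c₁ : ZMod N) - c₂) • w = 0 := by
        rw [sub_smul, h2, sub_self]
      have := eq_zero_of_smul_prim hw h3
      exact Units.ext (by linear_combination this)
    · rintro ⟨⟨v, hv⟩, hΦv⟩
      have hvH : AddSubgroup.zmultiples v = AddSubgroup.zmultiples w := by
        have : AddSubgroup.zmultiples v = H.1 := congrArg Subtype.val hΦv
        rw [this, ← hwH]
      have hvmem : v ∈ AddSubgroup.zmultiples w := by
        rw [← hvH]; exact AddSubgroup.mem_zmultiples v
      obtain ⟨c, rfl⟩ := (mem_zmultiples_iff' w v).mp hvmem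
      have hcu : IsUnit c := (prim_smul_iff hw c).mp hv
      exact ⟨hcu.unit, by apply Subtype.ext; apply Subtype.ext; show (hcu.unit : ZMod N) • w = c • w; rw [IsUnit.unit_spec]⟩
  have e : {v : Fin 2 → ZMod N // Prim N v} ≃ Sub × (ZMod N)ˣ :=
    (Equiv.sigmaFiberEquiv Φ).symm.trans
      ((Equiv.sigmaCongrRight fib).trans (Equiv.sigmaEquivProd Sub (ZMod N)ˣ))
  rw [Nat.card_congr e, Nat.card_prod]
  congr 1
  rw [Nat.card_eq_fintype_card, ZMod.card_units_eq_totient]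


def prodPi (α β : Type*) [AddMonoid α] [AddMonoid β] :
    (Fin 2 → α × β) ≃+ (Fin 2 → α) × (Fin 2 → β) where
  toFun f := (fun i => (f i).1, fun i => (f i).2)
  invFun g i := (g.1 i, g.2 i)
  left_inv f := rfl
  right_inv g := rfl
  map_add' f g := rfl

lemma card_ord_mul (a b : ℕ) (hab : Nat.Coprime a b) (ha : 0 < a) (hb : 0 < b) :
    Nat.card {v : Fin 2 → ZMod (a * b) // addOrderOf v = a * b}
      = Nat.card {v : Fin 2 → ZMod a // addOrderOf v = a}
        * Nat.card {v : Fin 2 → ZMod b // addOrderOf v = b} := by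
  haveI : NeZero a := ⟨ha.ne'⟩
  haveI : NeZero b := ⟨hb.ne'⟩
  let e : ZMod (a * b) ≃+ ZMod a × ZMod b := (ZMod.chineseRemainder hab).toAddEquiv
  let E : (Fin 2 → ZMod (a * b)) ≃+ (Fin 2 → ZMod a) × (Fin 2 → ZMod b) :=
    (AddEquiv.piCongrRight fun _ => e).trans (prodPi _ _)
  have hord : ∀ v, addOrderOf (E v) = addOrderOf v := fun v =>
    addOrderOf_injective E.toAddMonoidHom E.injective v
  have e1 : {v : Fin 2 → ZMod (a * b) // addOrderOf v = a * b}
      ≃ {w : (Fin 2 → ZMod a) × (Fin 2 → ZMod b) // addOrderOf w = a * b} :=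
    E.toEquiv.subtypeEquiv (fun v => by
      show addOrderOf v = a * b ↔ addOrderOf (E v) = a * b
      rw [hord])
  have e2 : {w : (Fin 2 → ZMod a) × (Fin 2 → ZMod b) // addOrderOf w = a * b}
      ≃ {w : (Fin 2 → ZMod a) × (Fin 2 → ZMod b) //
          addOrderOf w.1 = a ∧ addOrderOf w.2 = b} := by
    apply Equiv.subtypeEquivRight
    intro w
    rw [Prod.addOrderOf]
    constructor
    · intro h
      have hu : addOrderOf w.1 ∣ a := addOrderOf_dvd' a w.1
      have hv : addOrderOf w.2 ∣ b := addOrderOf_dvd' b w.2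
      have h1 : a * b ∣ addOrderOf w.1 * addOrderOf w.2 := by
        rw [← h]
        exact Nat.lcm_dvd (dvd_mul_right _ _) (dvd_mul_left _ _)
      have h3 : addOrderOf w.1 * addOrderOf w.2 = a * b :=
        Nat.dvd_antisymm (mul_dvd_mul hu hv) h1
      have hu' : addOrderOf w.1 ≤ a := Nat.le_of_dvd ha hu
      have hv' : addOrderOf w.2 ≤ b := Nat.le_of_dvd hb hv
      constructor
      · by_contra hne
        have hlt : addOrderOf w.1 < a := lt_of_le_of_ne hu' hne
        have k1 : addOrderOf w.1 * addOrderOf w.2 ≤ addOrderOf w.1 * b :=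
          Nat.mul_le_mul (le_refl _) hv'
        have k2 : addOrderOf w.1 * b < a * b := mul_lt_mul_of_pos_right hlt hb
        omega
      · by_contra hne
        have hlt : addOrderOf w.2 < b := lt_of_le_of_ne hv' hne
        have k1 : addOrderOf w.1 * addOrderOf w.2 ≤ a * addOrderOf w.2 :=
          Nat.mul_le_mul hu' (le_refl _)
        have k2 : a * addOrderOf w.2 < a * b := mul_lt_mul_of_pos_left hlt ha
        omega
    · rintro ⟨h1, h2⟩
      rw [h1, h2]
      exact hab.lcm_eq_mul
  rw [Nat.card_congr ((e1.trans e2).trans (Equiv.subtypeProdEquivProd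
    (p := fun x => addOrderOf x = a) (q := fun y => addOrderOf y = b))), Nat.card_prod]

lemma prim_iff_isUnit {p k : ℕ} (hp : p.Prime) (hk : 0 < k) (v : Fin 2 → ZMod (p ^ k)) :
    Prim (p ^ k) v ↔ IsUnit (v 0) ∨ IsUnit (v 1) := by
  haveI : Fact p.Prime := ⟨hp⟩
  haveI : NeZero (p ^ k) := ⟨pow_ne_zero k hp.pos.ne'⟩
  have hval : ∀ a : ZMod (p ^ k), ((a.val : ℕ) : ZMod (p ^ k)) = a := fun a => by
    rw [ZMod.natCast_val, ZMod.cast_id]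
  constructor
  · rintro ⟨x, y, hxy⟩
    by_contra hcon
    push_neg at hcon
    obtain ⟨h0, h1⟩ := hcon
    have hdvd : ∀ a : ZMod (p ^ k), ¬IsUnit a → p ∣ a.val := by
      intro a hna
      by_contra hpa
      have hcop : (a.val).Coprime p := (hp.coprime_iff_not_dvd.mpr hpa).symm
      refine hna ?_
      rw [← hval a]
      exact (ZMod.isUnit_iff_coprime a.val (p ^ k)).mpr
        ((Nat.coprime_pow_right_iff hk a.val p).mpr hcop)
    let f : ZMod (p ^ k) →+* ZMod p := ZMod.castHom (dvd_pow_self p hk.ne') (ZMod p)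
    have hf : ∀ a : ZMod (p ^ k), p ∣ a.val → f a = 0 := by
      intro a hpa
      rw [← hval a, map_natCast, ZMod.natCast_eq_zero_iff]
      exact hpa
    have := congrArg f hxy
    rw [map_add, _root_.map_mul, _root_.map_mul, _root_.map_one, hf _ (hdvd _ h0), hf _ (hdvd _ h1)] at this
    simp at this
  · rintro (h | h)
    · obtain ⟨u, hu⟩ := h
      exact ⟨(↑u⁻¹ : ZMod (p ^ k)), 0, by rw [← hu, zero_mul, add_zero, u.inv_mul]⟩
    · obtain ⟨u, hu⟩ := h
      exact ⟨0, (↑u⁻¹ : ZMod (p ^ k)), by rw [← hu, zero_mul, zero_add, u.inv_mul]⟩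

lemma card_ord_prime_pow {p k : ℕ} (hp : p.Prime) (hk : 0 < k) :
    Nat.card {v : Fin 2 → ZMod (p ^ k) // addOrderOf v = p ^ k}
      = (p ^ k) ^ 2 - (p ^ (k - 1)) ^ 2 := by
  haveI : Fact p.Prime := ⟨hp⟩
  haveI : NeZero (p ^ k) := ⟨pow_ne_zero k hp.pos.ne'⟩
  classical
  have hppos : 0 < p ^ k := pow_pos hp.pos k
  have eU : (ZMod (p ^ k))ˣ ≃ {a : ZMod (p ^ k) // IsUnit a} :=
    Equiv.ofBijective (fun u => ⟨↑u, u.isUnit⟩)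
      ⟨fun u v h => Units.ext (congrArg Subtype.val h),
       fun a => ⟨a.2.unit, Subtype.ext a.2.unit_spec⟩⟩
  have hnu : Nat.card {a : ZMod (p ^ k) // ¬IsUnit a} = p ^ (k - 1) := by
    have hIsU : Fintype.card {a : ZMod (p ^ k) // IsUnit a} = (p ^ k).totient := by
      rw [← Fintype.card_congr eU, ZMod.card_units_eq_totient]
    have hA : Fintype.card {a : ZMod (p ^ k) // ¬IsUnit a}
        = Fintype.card (ZMod (p ^ k)) - Fintype.card {a : ZMod (p ^ k) // IsUnit a} :=
      Fintype.card_subtype_compl _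
    rw [Nat.card_eq_fintype_card, hA, hIsU, ZMod.card, Nat.totient_prime_pow hp hk]
    obtain ⟨k', rfl⟩ : ∃ k', k = k' + 1 := ⟨k - 1, by omega⟩
    simp only [Nat.add_sub_cancel]
    rw [pow_succ, ← Nat.mul_sub]
    have h5 : p - (p - 1) = 1 := by have := hp.two_le; omega
    rw [h5, mul_one]
  have h2 : Nat.card {v : Fin 2 → ZMod (p ^ k) // ¬IsUnit (v 0) ∧ ¬IsUnit (v 1)}
      = (p ^ (k - 1)) ^ 2 := by
    have e : {v : Fin 2 → ZMod (p ^ k) // ¬IsUnit (v 0) ∧ ¬IsUnit (v 1)}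
        ≃ {a : ZMod (p ^ k) // ¬IsUnit a} × {a : ZMod (p ^ k) // ¬IsUnit a} :=
      ((finTwoArrowEquiv (ZMod (p ^ k))).subtypeEquiv (fun v => by
        simp [finTwoArrowEquiv])).trans (Equiv.subtypeProdEquivProd
          (p := fun a : ZMod (p ^ k) => ¬IsUnit a) (q := fun a : ZMod (p ^ k) => ¬IsUnit a))
    rw [Nat.card_congr e, Nat.card_prod, hnu, sq]
  have htotal : Nat.card {v : Fin 2 → ZMod (p ^ k) // ¬IsUnit (v 0) ∧ ¬IsUnit (v 1)}
      + Nat.card {v : Fin 2 → ZMod (p ^ k) // ¬(¬IsUnit (v 0) ∧ ¬IsUnit (v 1))}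
      = (p ^ k) ^ 2 := by
    have hA : Fintype.card {v : Fin 2 → ZMod (p ^ k) // ¬(¬IsUnit (v 0) ∧ ¬IsUnit (v 1))}
        = Fintype.card (Fin 2 → ZMod (p ^ k))
          - Fintype.card {v : Fin 2 → ZMod (p ^ k) // ¬IsUnit (v 0) ∧ ¬IsUnit (v 1)} :=
      Fintype.card_subtype_compl _
    rw [Nat.card_eq_fintype_card, Nat.card_eq_fintype_card, hA]
    have hle : Fintype.card {v : Fin 2 → ZMod (p ^ k) // ¬IsUnit (v 0) ∧ ¬IsUnit (v 1)}
        ≤ Fintype.card (Fin 2 → ZMod (p ^ k)) := Fintype.card_subtype_le _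
    rw [Nat.add_sub_cancel' hle, Fintype.card_fun, ZMod.card, Fintype.card_fin, sq]
  have goal' : Nat.card {v : Fin 2 → ZMod (p ^ k) // ¬(¬IsUnit (v 0) ∧ ¬IsUnit (v 1))}
      = (p ^ k) ^ 2 - (p ^ (k - 1)) ^ 2 := by
    rw [← h2]
    exact Nat.eq_sub_of_add_eq' htotal
  -- reduce to not-Prim count
  have h1 : Nat.card {v : Fin 2 → ZMod (p ^ k) // addOrderOf v = p ^ k}
      = Nat.card {v : Fin 2 → ZMod (p ^ k) // ¬(¬IsUnit (v 0) ∧ ¬IsUnit (v 1))} := by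
    apply Nat.card_congr
    apply Equiv.subtypeEquivRight
    intro v
    rw [addOrderOf_eq_iff_prim hppos, prim_iff_isUnit hp hk]
    tauto
  rw [h1]
  exact goal'


lemma key_identity : ∀ N : ℕ, 0 < N →
    Nat.card {v : Fin 2 → ZMod N // addOrderOf v = N} * ∏ p ∈ N.primeFactors, p
      = N.totient * (N * ∏ p ∈ N.primeFactors, (p + 1)) := by
  intro N
  induction N using Nat.recOnPosPrimePosCoprime with
  | prime_pow p k hpp hk =>
      intro _
      rw [card_ord_prime_pow hpp hk, Nat.primeFactors_prime_pow hk.ne' hpp,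
        Finset.prod_singleton, Finset.prod_singleton, Nat.totient_prime_pow hpp hk]
      obtain ⟨k', rfl⟩ : ∃ k', k = k' + 1 := ⟨k - 1, by omega⟩
      simp only [Nat.add_sub_cancel]
      rw [pow_succ p k']
      have h3 : (p ^ k') ^ 2 ≤ (p ^ k' * p) ^ 2 :=
        Nat.pow_le_pow_left (Nat.le_mul_of_pos_right _ hpp.pos) 2
      have h4 : 1 ≤ p := hpp.pos
      zify [h3, h4]
      ring
  | zero => intro h; exact absurd h (lt_irrefl 0)
  | one =>
      intro _
      have hall : ∀ v : Fin 2 → ZMod 1, addOrderOf v = 1 := fun v => by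
        rw [Subsingleton.elim v 0, addOrderOf_zero]
      have hcard : Nat.card {v : Fin 2 → ZMod 1 // addOrderOf v = 1} = 1 := by
        rw [Nat.card_congr (Equiv.subtypeUnivEquiv hall), Nat.card_unique]
      rw [hcard]
      simp
  | coprime a b ha hb hab iha ihb =>
      intro _
      have ha0 : 0 < a := by omega
      have hb0 : 0 < b := by omega
      have Ia := iha ha0
      have Ib := ihb hb0
      rw [card_ord_mul a b hab ha0 hb0, hab.primeFactors_mul,
        Finset.prod_union hab.disjoint_primeFactors,
        Finset.prod_union hab.disjoint_primeFactors, Nat.totient_mul hab]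
      calc Nat.card {v : Fin 2 → ZMod a // addOrderOf v = a}
            * Nat.card {v : Fin 2 → ZMod b // addOrderOf v = b}
            * ((∏ p ∈ a.primeFactors, p) * ∏ p ∈ b.primeFactors, p)
          = (Nat.card {v : Fin 2 → ZMod a // addOrderOf v = a} * ∏ p ∈ a.primeFactors, p)
            * (Nat.card {v : Fin 2 → ZMod b // addOrderOf v = b} * ∏ p ∈ b.primeFactors, p) := by
            ring
        _ = (a.totient * (a * ∏ p ∈ a.primeFactors, (p + 1)))
            * (b.totient * (b * ∏ p ∈ b.primeFactors, (p + 1))) := by rw [Ia, Ib]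
        _ = a.totient * b.totient
            * (a * b * ((∏ p ∈ a.primeFactors, (p + 1)) * ∏ p ∈ b.primeFactors, (p + 1))) := by
            ring


lemma exists_gl [NeZero N] {v : Fin 2 → ZMod N} (hv : Prim N v) :
    ∃ g : GL (Fin 2) (ZMod N),
      (g : Matrix (Fin 2) (Fin 2) (ZMod N)) *ᵥ ![1, 0] = v := by
  obtain ⟨x, y, hxy⟩ := hv
  have hdet : (!![v 0, -y; v 1, x] : Matrix (Fin 2) (Fin 2) (ZMod N)).det = 1 := by
    rw [Matrix.det_fin_two_of]
    linear_combination hxy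
  have hu : IsUnit (!![v 0, -y; v 1, x] : Matrix (Fin 2) (Fin 2) (ZMod N)) := by
    rw [Matrix.isUnit_iff_isUnit_det, hdet]
    exact isUnit_one
  refine ⟨hu.unit, ?_⟩
  have hcoe : ((hu.unit : GL (Fin 2) (ZMod N)) : Matrix (Fin 2) (Fin 2) (ZMod N))
      = !![v 0, -y; v 1, x] := hu.unit_spec
  rw [hcoe]
  funext i
  fin_cases i <;>
    simp [Matrix.mulVec, dotProduct, Fin.sum_univ_two]

end CyclicAux

open CyclicAux in
/-- There are exactly `ψ(N)` cyclic subgroups of order `N` of `(ℤ/Nℤ)²`, and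
`GL₂(ℤ/Nℤ)` acts transitively on them. -/
theorem card_cyclic_subgroups_and_transitive (N : ℕ) (hN : 0 < N) :
    ((Nat.card {H : AddSubgroup (Fin 2 → ZMod N) // IsCyclicOfOrder N H} : ℕ) : ℝ)
        = dedekindPsi N ∧
    ∀ H₁ H₂ : AddSubgroup (Fin 2 → ZMod N),
      IsCyclicOfOrder N H₁ → IsCyclicOfOrder N H₂ →
      ∃ g : GL (Fin 2) (ZMod N),
        H₂ = H₁.map
          (Matrix.mulVecLin (g : Matrix (Fin 2) (Fin 2) (ZMod N))).toAddMonoidHom := by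
  haveI : NeZero N := ⟨hN.ne'⟩
  constructor
  · have h1 : Nat.card {v : Fin 2 → ZMod N // addOrderOf v = N}
        = Nat.card {v : Fin 2 → ZMod N // Prim N v} :=
      Nat.card_congr (Equiv.subtypeEquivRight (fun v => addOrderOf_eq_iff_prim hN v))
    have h3 := key_identity N hN
    rw [h1, card_prim_eq hN] at h3
    set c := Nat.card {H : AddSubgroup (Fin 2 → ZMod N) // IsCyclicOfOrder N H} with hc
    have h4 : c * (∏ p ∈ N.primeFactors, p) = N * ∏ p ∈ N.primeFactors, (p + 1) := by
      have hφ : 0 < N.totient := Nat.totient_pos.mpr hN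
      apply Nat.eq_of_mul_eq_mul_left hφ
      calc N.totient * (c * ∏ p ∈ N.primeFactors, p)
          = c * N.totient * ∏ p ∈ N.primeFactors, p := by ring
        _ = N.totient * (N * ∏ p ∈ N.primeFactors, (p + 1)) := h3
    have hQR : (∏ p ∈ N.primeFactors, (p : ℝ)) ≠ 0 := by
      rw [Finset.prod_ne_zero_iff]
      intro p hp
      exact_mod_cast (Nat.prime_of_mem_primeFactors hp).pos.ne'
    have h5 : (c : ℝ) * ∏ p ∈ N.primeFactors, (p : ℝ)
        = (N : ℝ) * ∏ p ∈ N.primeFactors, ((p : ℝ) + 1) := by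
      have := congrArg (fun n : ℕ => (n : ℝ)) h4
      push_cast at this
      exact this
    have h6 : dedekindPsi N * ∏ p ∈ N.primeFactors, (p : ℝ)
        = (N : ℝ) * ∏ p ∈ N.primeFactors, ((p : ℝ) + 1) := by
      unfold dedekindPsi
      rw [mul_assoc, ← Finset.prod_mul_distrib]
      congr 1
      apply Finset.prod_congr rfl
      intro p hp
      have hp0 : (p : ℝ) ≠ 0 := by
        exact_mod_cast (Nat.prime_of_mem_primeFactors hp).pos.ne'
      field_simp
    exact mul_right_cancel₀ hQR (h5.trans h6.symm)
  · intro H₁ H₂ h₁ h₂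
    obtain ⟨v₁, hv₁, hH₁⟩ := exists_prim_gen hN h₁
    obtain ⟨v₂, hv₂, hH₂⟩ := exists_prim_gen hN h₂
    obtain ⟨g₁, hg₁⟩ := exists_gl hv₁
    obtain ⟨g₂, hg₂⟩ := exists_gl hv₂
    refine ⟨g₂ * g₁⁻¹, ?_⟩
    have e2 : (((g₁⁻¹ : GL (Fin 2) (ZMod N)) : Matrix (Fin 2) (Fin 2) (ZMod N))) *ᵥ v₁
        = ![1, 0] := by
      rw [← hg₁, Matrix.mulVec_mulVec]
      have : ((g₁⁻¹ : GL (Fin 2) (ZMod N)) : Matrix (Fin 2) (Fin 2) (ZMod N))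
          * ((g₁ : GL (Fin 2) (ZMod N)) : Matrix (Fin 2) (Fin 2) (ZMod N)) = 1 := by
        rw [← Units.val_mul, inv_mul_cancel, Units.val_one]
      rw [this, Matrix.one_mulVec]
    have e3 : (((g₂ * g₁⁻¹ : GL (Fin 2) (ZMod N)) : Matrix (Fin 2) (Fin 2) (ZMod N))) *ᵥ v₁
        = v₂ := by
      rw [Units.val_mul, ← Matrix.mulVec_mulVec, e2, hg₂]
    rw [← hH₁, ← hH₂, AddMonoidHom.map_zmultiples]
    congr 1
    rw [show (Matrix.mulVecLin
        ((g₂ * g₁⁻¹ : GL (Fin 2) (ZMod N)) : Matrix (Fin 2) (Fin 2) (ZMod N))).toAddMonoidHom v₁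
      = ((g₂ * g₁⁻¹ : GL (Fin 2) (ZMod N)) : Matrix (Fin 2) (Fin 2) (ZMod N)) *ᵥ v₁ from rfl, e3]
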